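/- Let (K, K^∨) be a pair of dual reflexive Gorenstein cones of index k with deg^∨ = t_1 + ⋯ + t_k where each t_i ∈ K^∨_(1), and set Δ^∨ = {y ∈ K^∨ : ⟨deg, y⟩ = 1}. Let w_1, …, w_s be lattice points of Δ^∨ and suppose there exists v ∈ ℝ^d with ⟨v, t_i⟩ = 0 for all i, ⟨v, y⟩ ≥ −1 for all y ∈ Δ^∨, and ⟨v, w_j⟩ = −1 for all j. Then every w ∈ K^∨ that can be written as w = ∑_{i=1}^k a_i t_i + ∑_{j=1}^s b_j w_j with a_i ∈ ℝ and b_j ≥ 0 satisfies a_i ≥ 0 for all i; equivalently, the intersection of K^∨ with the set (ℝ t_1 + ⋯ + ℝ t_k) + cone(w_1, …, w_s) equals the cone of all nonnegative combinations of t_1, …, t_k, w_1, …, w_s. -/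

import Mathlib

open scoped BigOperators Pointwise

noncomputable section

/-- The standard pairing `⟨x, y⟩ = ∑ i, x i * y i` on `ℝ^d`. -/
def pairR {d : ℕ} (x y : Fin d → ℝ) : ℝ := ∑ i, x i * y i

/-- A point of `ℝ^d` is a lattice point if all of its coordinates are integers. -/
def IsLatticePoint {d : ℕ} (x : Fin d → ℝ) : Prop := ∀ i, ∃ z : ℤ, x i = (z : ℝ)

/-- The dual cone `K^∨ = {y : ⟨x, y⟩ ≥ 0 for all x ∈ K}`. -/
def dualCone {d : ℕ} (K : Set (Fin d → ℝ)) : Set (Fin d → ℝ) :=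
  { y | ∀ x ∈ K, 0 ≤ pairR x y }

/-- A Gorenstein cone with degree element `n` (a lattice point): the set of all
nonnegative real linear combinations of a finite set of lattice points, each pairing
to `1` with `n`, such that `K ∩ (−K) = {0}` and `span K = ℝ^d`. -/
def IsGorensteinCone {d : ℕ} (K : Set (Fin d → ℝ)) (n : Fin d → ℝ) : Prop :=
  IsLatticePoint n ∧
  (∃ S : Finset (Fin d → ℝ),
      (∀ v ∈ S, IsLatticePoint v ∧ pairR v n = 1) ∧
      K = { x | ∃ c : (Fin d → ℝ) → ℝ, (∀ v, 0 ≤ c v) ∧ x = ∑ v ∈ S, c v • v }) ∧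
  K ∩ (-K) = {0} ∧
  Submodule.span ℝ K = ⊤

/-- `K_(1)`: the lattice points `m ∈ K` with `⟨m, deg^∨⟩ = 1`. -/
def Kone {d : ℕ} (K : Set (Fin d → ℝ)) (degVee : Fin d → ℝ) : Set (Fin d → ℝ) :=
  { m | IsLatticePoint m ∧ m ∈ K ∧ pairR m degVee = 1 }

/-- `K^∨_(1)`: the lattice points `n ∈ K^∨` with `⟨deg, n⟩ = 1`. -/
def KvOne {d : ℕ} (K : Set (Fin d → ℝ)) (deg : Fin d → ℝ) : Set (Fin d → ℝ) :=
  { n | IsLatticePoint n ∧ n ∈ dualCone K ∧ pairR deg n = 1 }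

/-! ### Auxiliary lemmas -/

lemma pairR_comm {d : ℕ} (x y : Fin d → ℝ) : pairR x y = pairR y x := by
  simp [pairR, mul_comm]

lemma pairR_add_right {d : ℕ} (x y z : Fin d → ℝ) :
    pairR x (y + z) = pairR x y + pairR x z := by
  simp [pairR, mul_add, Finset.sum_add_distrib]

lemma pairR_smul_right {d : ℕ} (r : ℝ) (x y : Fin d → ℝ) :
    pairR x (r • y) = r * pairR x y := by
  simp [pairR, Finset.mul_sum]; ring_nf; simp [mul_comm, mul_left_comm]

lemma pairR_sum_right {d : ℕ} {ι : Type*} (s : Finset ι) (x : Fin d → ℝ) (f : ι → (Fin d → ℝ)) :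
    pairR x (∑ j ∈ s, f j) = ∑ j ∈ s, pairR x (f j) := by
  simp only [pairR, Finset.sum_apply, Finset.mul_sum]
  exact Finset.sum_comm

lemma pairR_add_left {d : ℕ} (x y z : Fin d → ℝ) :
    pairR (x + y) z = pairR x z + pairR y z := by
  rw [pairR_comm, pairR_add_right, pairR_comm z x, pairR_comm z y]

lemma pairR_smul_left {d : ℕ} (r : ℝ) (x y : Fin d → ℝ) :
    pairR (r • x) y = r * pairR x y := by
  rw [pairR_comm, pairR_smul_right, pairR_comm]

lemma pairR_sum_left {d : ℕ} {ι : Type*} (s : Finset ι) (f : ι → (Fin d → ℝ)) (y : Fin d → ℝ) :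
    pairR (∑ j ∈ s, f j) y = ∑ j ∈ s, pairR (f j) y := by
  rw [pairR_comm, pairR_sum_right]
  exact Finset.sum_congr rfl fun j _ => pairR_comm _ _

lemma pairR_neg_right {d : ℕ} (x y : Fin d → ℝ) : pairR x (-y) = -pairR x y := by
  simp [pairR]

lemma pairR_int {d : ℕ} {x y : Fin d → ℝ} (hx : IsLatticePoint x) (hy : IsLatticePoint y) :
    ∃ z : ℤ, pairR x y = (z : ℝ) := by
  choose f hf using hx
  choose g hg using hy
  refine ⟨∑ i, f i * g i, ?_⟩
  rw [pairR]
  push_cast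
  exact Finset.sum_congr rfl fun i _ => by rw [hf, hg]

def pairLM {d : ℕ} (n : Fin d → ℝ) : (Fin d → ℝ) →ₗ[ℝ] ℝ where
  toFun x := pairR x n
  map_add' x y := by simp [pairR, add_mul, Finset.sum_add_distrib]
  map_smul' r x := by simp [pairR, Finset.mul_sum, mul_assoc]

lemma pairR_cont {d : ℕ} (n : Fin d → ℝ) : Continuous fun x : Fin d → ℝ => pairR x n :=
  continuous_finset_sum _ fun i _ => (continuous_apply i).mul continuous_const

lemma cone_isClosed {d : ℕ} (S : Finset (Fin d → ℝ)) (n : Fin d → ℝ)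
    (hS : ∀ m ∈ S, pairR m n = 1) :
    IsClosed {x : Fin d → ℝ | ∃ c : (Fin d → ℝ) → ℝ, (∀ v, 0 ≤ c v) ∧ x = ∑ v ∈ S, c v • v} := by
  classical
  set A : Set (Fin d → ℝ) :=
    {x | ∃ c : (Fin d → ℝ) → ℝ, (∀ v, 0 ≤ c v) ∧ x = ∑ v ∈ S, c v • v} with hA
  rcases S.eq_empty_or_nonempty with rfl | hSne
  · have : A = {0} := by
      ext x
      simp only [hA, Set.mem_setOf_eq, Finset.sum_empty, Set.mem_singleton_iff]
      constructor
      · rintro ⟨c, -, rfl⟩; rfl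
      · rintro rfl; exact ⟨fun _ => 0, fun _ => le_rfl, rfl⟩
    rw [this]; exact isClosed_singleton
  have hhull : ∀ p ∈ convexHull ℝ (S : Set (Fin d → ℝ)), pairR p n = 1 := by
    intro p hp
    have hlin : IsLinearMap ℝ (fun x : Fin d → ℝ => pairR x n) := (pairLM n).isLinear
    have hsub : convexHull ℝ (S : Set (Fin d → ℝ)) ⊆ {x | pairR x n = 1} :=
      convexHull_min (fun m hm => hS m hm) (convex_hyperplane hlin 1)
    exact hsub hp
  have hAeq : A = {x : Fin d → ℝ | ∃ r : ℝ, 0 ≤ r ∧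
      ∃ p ∈ convexHull ℝ (S : Set (Fin d → ℝ)), x = r • p} := by
    ext x
    constructor
    · rintro ⟨c, hc, rfl⟩
      set r : ℝ := ∑ v ∈ S, c v with hr
      rcases eq_or_lt_of_le (Finset.sum_nonneg fun v (_ : v ∈ S) => hc v) with hr0 | hrpos
      · obtain ⟨p₀, hp₀⟩ := hSne
        have hz : ∀ v ∈ S, c v = 0 :=
          (Finset.sum_eq_zero_iff_of_nonneg (fun v _ => hc v)).1 hr0.symm
        refine ⟨0, le_rfl, p₀, subset_convexHull ℝ _ hp₀, ?_⟩
        rw [zero_smul]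
        exact Finset.sum_eq_zero fun v hv => by rw [hz v hv, zero_smul]
      · refine ⟨r, le_of_lt hrpos, S.centerMass c id,
          S.centerMass_mem_convexHull (fun v _ => hc v) hrpos
            (fun v hv => Finset.mem_coe.2 hv), ?_⟩
        rw [Finset.centerMass, smul_smul, mul_inv_cancel₀ (ne_of_gt hrpos), one_smul]
        simp only [id]
    · rintro ⟨r, hr, p, hp, rfl⟩
      rw [Finset.convexHull_eq] at hp
      obtain ⟨wgt, hw0, hw1, hwx⟩ := hp
      refine ⟨fun v => if v ∈ S then r * wgt v else 0, ?_, ?_⟩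
      · intro v
        dsimp only
        by_cases hv : v ∈ S
        · rw [if_pos hv]; exact mul_nonneg hr (hw0 v hv)
        · rw [if_neg hv]
      rw [← hwx, Finset.centerMass, hw1, inv_one, one_smul, Finset.smul_sum]
      refine Finset.sum_congr rfl fun v hv => ?_
      dsimp only
      rw [if_pos hv, smul_smul]
      simp only [id]
  rw [hAeq]
  apply IsSeqClosed.isClosed
  intro xs x hxs hlim
  choose r hr0 p hp hxp using hxs
  obtain ⟨q, hq, φ, hφ, hqlim⟩ :=
    (S.finite_toSet.isCompact_convexHull (𝕜 := ℝ)).tendsto_subseq hp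
  have hrval : ∀ m, r m = pairR (xs m) n := by
    intro m
    rw [hxp m]
    have : pairR (r m • p m) n = r m * pairR (p m) n := by
      simp [pairR, Finset.mul_sum, mul_assoc]
    rw [this, hhull _ (hp m), mul_one]
  have hrlim : Filter.Tendsto (fun m => r (φ m)) Filter.atTop (nhds (pairR x n)) := by
    have : Filter.Tendsto (fun m => pairR (xs (φ m)) n) Filter.atTop (nhds (pairR x n)) :=
      ((pairR_cont n).continuousAt.tendsto.comp (hlim.comp hφ.tendsto_atTop))
    simpa [hrval] using this
  have hxlim : Filter.Tendsto (fun m => xs (φ m)) Filter.atTop (nhds (pairR x n • q)) := by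
    have := hrlim.smul hqlim
    simpa [hxp] using this
  have hxeq : x = pairR x n • q :=
    tendsto_nhds_unique (hlim.comp hφ.tendsto_atTop) hxlim
  exact ⟨pairR x n,
    le_of_tendsto_of_tendsto' tendsto_const_nhds hrlim fun m => hr0 (φ m), q, hq, hxeq⟩

lemma farkas {d : ℕ} (S : Finset (Fin d → ℝ)) (n : Fin d → ℝ)
    (hS : ∀ m ∈ S, pairR m n = 1) (l : Fin d → ℝ)
    (hl : ∀ y : Fin d → ℝ,
      (∀ x : Fin d → ℝ, (∃ c : (Fin d → ℝ) → ℝ, (∀ v, 0 ≤ c v) ∧ x = ∑ v ∈ S, c v • v) →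
        0 ≤ pairR x y) → 0 ≤ pairR l y) :
    ∃ c : (Fin d → ℝ) → ℝ, (∀ v, 0 ≤ c v) ∧ l = ∑ v ∈ S, c v • v := by
  classical
  set A : Set (Fin d → ℝ) :=
    {x | ∃ c : (Fin d → ℝ) → ℝ, (∀ v, 0 ≤ c v) ∧ x = ∑ v ∈ S, c v • v} with hA
  by_contra hnot
  have hlA : l ∉ A := hnot
  have hzero : (0 : Fin d → ℝ) ∈ A :=
    ⟨fun _ => 0, fun _ => le_rfl, by simp⟩
  have hsmul : ∀ (r : ℝ), 0 ≤ r → ∀ x ∈ A, r • x ∈ A := by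
    rintro r hr x ⟨c, hc, rfl⟩
    exact ⟨fun v => r * c v, fun v => mul_nonneg hr (hc v), by
      rw [Finset.smul_sum]; exact Finset.sum_congr rfl fun v _ => (smul_smul r (c v) v)⟩
  have hconv : Convex ℝ A := by
    rintro x ⟨c, hc, rfl⟩ y ⟨c', hc', rfl⟩ θ η hθ hη hθη
    refine ⟨fun v => θ * c v + η * c' v,
      fun v => add_nonneg (mul_nonneg hθ (hc v)) (mul_nonneg hη (hc' v)), ?_⟩
    rw [Finset.smul_sum, Finset.smul_sum, ← Finset.sum_add_distrib]
    exact Finset.sum_congr rfl fun v _ => by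
      rw [add_smul, smul_smul, smul_smul]
  obtain ⟨f, u, hfa, hfl⟩ :=
    geometric_hahn_banach_closed_point hconv (cone_isClosed S n hS) hlA
  have hu : 0 < u := by simpa using hfa 0 hzero
  have hfnonpos : ∀ x ∈ A, f x ≤ 0 := by
    intro x hx
    by_contra hpos
    push_neg at hpos
    have h2 : ((2 * u) / f x) • x ∈ A :=
      hsmul _ (div_nonneg (by linarith) hpos.le) x hx
    have := hfa _ h2
    rw [map_smul, smul_eq_mul, div_mul_cancel₀ _ (ne_of_gt hpos)] at this
    linarith
  set y : Fin d → ℝ := fun i => f (fun j => if i = j then (1:ℝ) else 0) with hy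
  have hfy : ∀ x : Fin d → ℝ, f x = pairR x y := by
    intro x
    conv_lhs => rw [pi_eq_sum_univ x]
    rw [map_sum]
    refine Finset.sum_congr rfl fun i _ => ?_
    rw [map_smul, smul_eq_mul]
  have hkey := hl (-y) (fun x hx => by
    rw [pairR_neg_right, ← hfy]
    exact neg_nonneg.2 (hfnonpos x hx))
  rw [pairR_neg_right, ← hfy] at hkey
  linarith

lemma mem_gen {d : ℕ} (T : Finset (Fin d → ℝ)) {m : Fin d → ℝ} (hm : m ∈ T) :
    ∃ c : (Fin d → ℝ) → ℝ, (∀ v, 0 ≤ c v) ∧ m = ∑ v ∈ T, c v • v := by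
  classical
  refine ⟨fun v => if v = m then 1 else 0, ?_, ?_⟩
  · intro v; by_cases h : v = m <;> simp [h]
  · have h1 : ∀ v ∈ T, (if v = m then (1:ℝ) else 0) • v = if v = m then id v else 0 := by
      intro v _; split <;> simp
    rw [Finset.sum_congr rfl h1, Finset.sum_ite_eq' T m id, if_pos hm]
    rfl

/-- With `deg^∨ = t_1 + ⋯ + t_k`, `t_i ∈ K^∨_(1)`: let `w_1, …, w_s` be
lattice points of `Δ^∨` and suppose `v` satisfies `⟨v, t_i⟩ = 0`, `⟨v, y⟩ ≥ −1` on
`Δ^∨`, and `⟨v, w_j⟩ = −1`. Then every `w ∈ K^∨` written as `∑ a_i t_i + ∑ b_j w_j`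
with `b_j ≥ 0` has all `a_i ≥ 0`; equivalently,
`K^∨ ∩ (span(t) + cone(w)) = cone(t_1, …, t_k, w_1, …, w_s)`. -/
theorem stmt6 {d k s : ℕ} (K : Set (Fin d → ℝ)) (deg degVee : Fin d → ℝ)
    (hK : IsGorensteinCone K degVee) (hKv : IsGorensteinCone (dualCone K) deg)
    (hk : pairR deg degVee = (k : ℝ))
    (t : Fin k → (Fin d → ℝ)) (ht : ∀ i, t i ∈ KvOne K deg)
    (hdec : degVee = ∑ i, t i)
    (w : Fin s → (Fin d → ℝ))
    (hw : ∀ j, IsLatticePoint (w j) ∧ w j ∈ dualCone K ∧ pairR deg (w j) = 1)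
    (v : Fin d → ℝ) (hvt : ∀ i, pairR v (t i) = 0)
    (hvDelta : ∀ y, y ∈ dualCone K → pairR deg y = 1 → -1 ≤ pairR v y)
    (hvw : ∀ j, pairR v (w j) = -1) :
    (∀ w' ∈ dualCone K, ∀ (a : Fin k → ℝ) (b : Fin s → ℝ), (∀ j, 0 ≤ b j) →
        w' = (∑ i, a i • t i) + ∑ j, b j • w j → ∀ i, 0 ≤ a i) ∧
    dualCone K ∩ { x | ∃ (a : Fin k → ℝ) (b : Fin s → ℝ), (∀ j, 0 ≤ b j) ∧
          x = (∑ i, a i • t i) + ∑ j, b j • w j }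
      = { x | ∃ (a : Fin k → ℝ) (b : Fin s → ℝ), (∀ i, 0 ≤ a i) ∧ (∀ j, 0 ≤ b j) ∧
          x = (∑ i, a i • t i) + ∑ j, b j • w j } := by
  classical
  obtain ⟨-, ⟨S, hSprop, hKeq⟩, -, -⟩ := hK
  obtain ⟨-, ⟨S', hS'prop, hKveq⟩, -, -⟩ := hKv
  have hmK : ∀ m ∈ S, m ∈ K := fun m hm => by
    rw [hKeq]; exact mem_gen S hm
  have huKv : ∀ u ∈ S', u ∈ dualCone K := fun u hu => by
    rw [hKveq]; exact mem_gen S' hu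
  set l : Fin d → ℝ := v + deg with hldef
  -- l is in the double dual of K
  have hl : ∀ y : Fin d → ℝ,
      (∀ x : Fin d → ℝ, (∃ c : (Fin d → ℝ) → ℝ, (∀ v', 0 ≤ c v') ∧ x = ∑ v' ∈ S, c v' • v') →
        0 ≤ pairR x y) → 0 ≤ pairR l y := by
    intro y hy
    have hyD : y ∈ dualCone K := by
      intro x hx
      rw [hKeq] at hx
      exact hy x hx
    rw [hKveq] at hyD
    obtain ⟨c, hc, hyeq⟩ := hyD
    rw [pairR_comm, hyeq, pairR_sum_left]
    apply Finset.sum_nonneg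
    intro u hu
    rw [pairR_smul_left]
    apply mul_nonneg (hc u)
    have hu1 : pairR u deg = 1 := (hS'prop u hu).2
    have hu2 : -1 ≤ pairR v u :=
      hvDelta u (huKv u hu) (by rw [pairR_comm]; exact hu1)
    have : pairR u l = pairR u v + pairR u deg := pairR_add_right u v deg
    rw [this, hu1, pairR_comm u v]
    linarith
  obtain ⟨c, hc, hlrep⟩ := farkas S degVee (fun m hm => (hSprop m hm).2) l hl
  -- key: for each i there is a generator m with the right pairings
  have key : ∀ i : Fin k, ∃ m, m ∈ K ∧ IsLatticePoint m ∧ 0 < pairR m (t i) ∧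
      (∀ i', i' ≠ i → pairR m (t i') = 0) ∧ (∀ j, pairR m (w j) = 0) := by
    intro i
    have hl_ti : pairR l (t i) = 1 := by
      rw [hldef, pairR_add_left, hvt i, (ht i).2.2, zero_add]
    have hexp : pairR l (t i) = ∑ m ∈ S, c m * pairR m (t i) := by
      rw [hlrep, pairR_sum_left]
      exact Finset.sum_congr rfl fun m _ => pairR_smul_left _ _ _
    have hsum1 : ∑ m ∈ S, c m * pairR m (t i) = 1 := by rw [← hexp, hl_ti]
    obtain ⟨m₀, hm₀S, hne⟩ := Finset.exists_ne_zero_of_sum_ne_zero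
      (by rw [hsum1]; exact one_ne_zero)
    have hm₀K : m₀ ∈ K := hmK m₀ hm₀S
    have hcne : c m₀ ≠ 0 ∧ pairR m₀ (t i) ≠ 0 := mul_ne_zero_iff.1 hne
    have hcpos : 0 < c m₀ := lt_of_le_of_ne (hc m₀) (Ne.symm hcne.1)
    have hαpos : 0 < pairR m₀ (t i) :=
      lt_of_le_of_ne ((ht i).2.1 m₀ hm₀K) (Ne.symm hcne.2)
    -- pairings with the w j vanish
    have hwj : ∀ j, pairR m₀ (w j) = 0 := by
      intro j
      have hl_wj : pairR l (w j) = 0 := by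
        rw [hldef, pairR_add_left, hvw j, (hw j).2.2]; ring
      have hexpw : pairR l (w j) = ∑ m ∈ S, c m * pairR m (w j) := by
        rw [hlrep, pairR_sum_left]
        exact Finset.sum_congr rfl fun m _ => pairR_smul_left _ _ _
      have hall := (Finset.sum_eq_zero_iff_of_nonneg
        (fun m hm => mul_nonneg (hc m) ((hw j).2.1 m (hmK m hm)))).1
        (by rw [← hexpw, hl_wj])
      have := hall m₀ hm₀S
      exact (mul_eq_zero.1 this).resolve_left hcne.1
    -- pairings with the other t i' vanish
    have hsumt : ∑ i', pairR m₀ (t i') = 1 := by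
      rw [← pairR_sum_right, ← hdec]
      exact (hSprop m₀ hm₀S).2
    have hm₀lat : IsLatticePoint m₀ := (hSprop m₀ hm₀S).1
    have hα1 : 1 ≤ pairR m₀ (t i) := by
      obtain ⟨z, hz⟩ := pairR_int hm₀lat (ht i).1
      have hzpos : 0 < z := by exact_mod_cast hz ▸ hαpos
      have : (1 : ℤ) ≤ z := hzpos
      rw [hz]; exact_mod_cast this
    have herase : ∑ i' ∈ Finset.univ.erase i, pairR m₀ (t i') = 1 - pairR m₀ (t i) := by
      have := Finset.sum_erase_add Finset.univ (fun i' => pairR m₀ (t i')) (Finset.mem_univ i)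
      rw [hsumt] at this
      linarith [this]
    have hzero' : ∀ i' ∈ Finset.univ.erase i, pairR m₀ (t i') = 0 := by
      apply (Finset.sum_eq_zero_iff_of_nonneg
        (fun i' _ => (ht i').2.1 m₀ hm₀K)).1
      have h1 : ∑ i' ∈ Finset.univ.erase i, pairR m₀ (t i') ≤ 0 := by
        rw [herase]; linarith
      have h2 : 0 ≤ ∑ i' ∈ Finset.univ.erase i, pairR m₀ (t i') :=
        Finset.sum_nonneg fun i' _ => (ht i').2.1 m₀ hm₀K
      linarith
    exact ⟨m₀, hm₀K, hm₀lat, hαpos,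
      fun i' hne' => hzero' i' (Finset.mem_erase.2 ⟨hne', Finset.mem_univ i'⟩), hwj⟩
  -- part 1
  have part1 : ∀ w' ∈ dualCone K, ∀ (a : Fin k → ℝ) (b : Fin s → ℝ), (∀ j, 0 ≤ b j) →
      w' = (∑ i, a i • t i) + ∑ j, b j • w j → ∀ i, 0 ≤ a i := by
    intro w' hw' a b hb heq i
    obtain ⟨m, hmK', -, hmpos, hm0, hmw⟩ := key i
    have h0 := hw' m hmK'
    rw [heq, pairR_add_right, pairR_sum_right, pairR_sum_right] at h0
    have e1 : ∑ i', pairR m (a i' • t i') = a i * pairR m (t i) := by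
      rw [Finset.sum_congr rfl (fun i' _ => pairR_smul_right (a i') m (t i'))]
      exact Finset.sum_eq_single i
        (fun i' _ hne' => by rw [hm0 i' hne', mul_zero])
        (fun h => absurd (Finset.mem_univ i) h)
    have e2 : ∑ j, pairR m (b j • w j) = 0 :=
      Finset.sum_eq_zero fun j _ => by rw [pairR_smul_right, hmw j, mul_zero]
    rw [e1, e2, add_zero] at h0
    exact nonneg_of_mul_nonneg_right (by linarith [h0] : 0 ≤ pairR m (t i) * a i) hmpos
  refine ⟨part1, ?_⟩
  ext x
  constructor
  · rintro ⟨hxD, a, b, hb, hxeq⟩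
    exact ⟨a, b, part1 x hxD a b hb hxeq, hb, hxeq⟩
  · rintro ⟨a, b, ha, hb, hxeq⟩
    refine ⟨?_, a, b, hb, hxeq⟩
    intro m hm
    rw [hxeq, pairR_add_right, pairR_sum_right, pairR_sum_right]
    apply add_nonneg
    · apply Finset.sum_nonneg
      intro i _
      rw [pairR_smul_right]
      exact mul_nonneg (ha i) ((ht i).2.1 m hm)
    · apply Finset.sum_nonneg
      intro j _
      rw [pairR_smul_right]
      exact mul_nonneg (hb j) ((hw j).2.1 m hm)
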